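/- (Extended Neyman–Pearson lemma) Let ε₀ and ε₁ be random variables with densities f₀ and f₁ with respect to a measure μ, let Λ = f₁/f₀, and let h : Z → [0,1] be measurable. Fix t ≥ 0 and a measurable set S with {z : Λ(z) < t} ⊆ S ⊆ {z : Λ(z) ≤ t}. If E[h(ε₀)] ≥ P₀(S), then E[h(ε₁)] ≥ P₁(S). -/

import Mathlib

open MeasureTheory ENNReal

/-- extended Neyman–Pearson lemma (lower-bound version). -/
theorem stmt_2 {Z : Type*} [MeasurableSpace Z] (μ : Measure Z)
    (f₀ f₁ : Z → ℝ≥0∞) (hf₀ : Measurable f₀) (hf₁ : Measurable f₁)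
    (hprob₀ : ∫⁻ z, f₀ z ∂μ = 1) (hprob₁ : ∫⁻ z, f₁ z ∂μ = 1)
    (h : Z → ℝ≥0∞) (hh : Measurable h) (hh1 : ∀ z, h z ≤ 1)
    (Λ : Z → ℝ≥0∞) (hΛ : Λ = fun z => f₁ z / f₀ z)
    (t : NNReal) (S : Set Z) (hS : MeasurableSet S)
    (hS1 : {z | Λ z < (t : ℝ≥0∞)} ⊆ S) (hS2 : S ⊆ {z | Λ z ≤ (t : ℝ≥0∞)})
    (hyp : ∫⁻ z in S, f₀ z ∂μ ≤ ∫⁻ z, h z * f₀ z ∂μ) :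
    ∫⁻ z in S, f₁ z ∂μ ≤ ∫⁻ z, h z * f₁ z ∂μ := by
  subst hΛ
  -- split lemma: ∫_S f = ∫_S h f + ∫_S (1-h) f (for any measure restriction)
  have hsplit : ∀ (f : Z → ℝ≥0∞), Measurable f → ∀ (ν : Measure Z),
      ∫⁻ z, f z ∂ν = ∫⁻ z, h z * f z ∂ν + ∫⁻ z, (1 - h z) * f z ∂ν := by
    intro f hf ν
    rw [← lintegral_add_left (f := fun z => h z * f z) (hh.mul hf)]
    congr 1; funext z
    rw [← add_mul, add_tsub_cancel_of_le (hh1 z), one_mul]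
  have hmono : ∀ (f : Z → ℝ≥0∞), ∀ (ν : Measure Z),
      ∫⁻ z, h z * f z ∂ν ≤ ∫⁻ z, f z ∂ν := by
    intro f ν
    refine lintegral_mono fun z => ?_
    calc h z * f z ≤ 1 * f z := mul_le_mul_left (hh1 z) _
    _ = f z := one_mul _
  -- finiteness
  have hfin : ∫⁻ z in S, h z * f₀ z ∂μ ≠ ∞ := by
    refine ne_top_of_le_ne_top (b := (1 : ℝ≥0∞)) one_ne_top ?_
    rw [← hprob₀]
    calc ∫⁻ z in S, h z * f₀ z ∂μ ≤ ∫⁻ z in S, f₀ z ∂μ := hmono f₀ _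
      _ ≤ ∫⁻ z, f₀ z ∂μ := setLIntegral_le_lintegral _ _
  -- a.e. finiteness of f₀
  have hf0fin : ∀ᵐ z ∂μ, f₀ z ≠ ∞ := by
    filter_upwards [ae_lt_top hf₀ (by simp [hprob₀])] with z hz using hz.ne
  -- on S: f₁ ≤ t * f₀ a.e.
  have honS : ∀ᵐ z ∂(μ.restrict S), f₁ z ≤ (t : ℝ≥0∞) * f₀ z := by
    rw [ae_restrict_iff' hS]
    filter_upwards [hf0fin] with z hzfin hzS
    have hle : f₁ z / f₀ z ≤ (t : ℝ≥0∞) := hS2 hzS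
    rcases eq_or_ne (f₀ z) 0 with h0 | h0
    · rcases eq_or_ne (f₁ z) 0 with h1 | h1
      · simp [h1]
      · exfalso
        rw [h0, ENNReal.div_zero h1] at hle
        exact (not_le.2 (coe_lt_top)) hle
    · rw [ENNReal.div_le_iff_le_mul (Or.inl h0) (Or.inl hzfin)] at hle
      exact hle
  -- on Sᶜ: t * f₀ ≤ f₁ pointwise
  have honSc : ∀ z, z ∉ S → (t : ℝ≥0∞) * f₀ z ≤ f₁ z := by
    intro z hz
    have hge : (t : ℝ≥0∞) ≤ f₁ z / f₀ z := by
      by_contra hx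
      exact hz (hS1 (not_le.1 hx))
    rcases eq_or_ne (f₀ z) 0 with h0 | h0
    · simp [h0]
    rcases eq_or_ne (f₀ z) ∞ with hT | hT
    · have : f₁ z / f₀ z = 0 := by
        rw [hT]; simp
      rw [this, le_zero_iff] at hge
      simp [hge]
    · exact (ENNReal.le_div_iff_mul_le (Or.inl h0) (Or.inl hT)).1 hge
  -- key f₀ inequality: ∫_S (1-h) f₀ ≤ ∫_{Sᶜ} h f₀
  have key0 : ∫⁻ z in S, (1 - h z) * f₀ z ∂μ ≤ ∫⁻ z in Sᶜ, h z * f₀ z ∂μ := by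
    have h1 : ∫⁻ z in S, h z * f₀ z ∂μ + ∫⁻ z in S, (1 - h z) * f₀ z ∂μ ≤
        ∫⁻ z in S, h z * f₀ z ∂μ + ∫⁻ z in Sᶜ, h z * f₀ z ∂μ := by
      rw [← hsplit f₀ hf₀ (μ.restrict S),
          lintegral_add_compl (fun z => h z * f₀ z) hS]
      exact hyp
    exact (ENNReal.add_le_add_iff_left hfin).1 h1
  -- finish
  calc ∫⁻ z in S, f₁ z ∂μ
      = ∫⁻ z in S, h z * f₁ z ∂μ + ∫⁻ z in S, (1 - h z) * f₁ z ∂μ :=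
        hsplit f₁ hf₁ (μ.restrict S)
    _ ≤ ∫⁻ z in S, h z * f₁ z ∂μ + ∫⁻ z in Sᶜ, h z * f₁ z ∂μ := by
        gcongr _ + ?_
        calc ∫⁻ z in S, (1 - h z) * f₁ z ∂μ
            ≤ ∫⁻ z in S, (1 - h z) * ((t : ℝ≥0∞) * f₀ z) ∂μ := by
              refine lintegral_mono_ae ?_
              filter_upwards [honS] with z hz using mul_le_mul_right hz _
          _ = (t : ℝ≥0∞) * ∫⁻ z in S, (1 - h z) * f₀ z ∂μ := by
              rw [← lintegral_const_mul _ (f := fun z => (1 - h z) * f₀ z) ((measurable_const.sub hh).mul hf₀)]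
              congr 1; funext z; ring
          _ ≤ (t : ℝ≥0∞) * ∫⁻ z in Sᶜ, h z * f₀ z ∂μ := mul_le_mul_right key0 _
          _ = ∫⁻ z in Sᶜ, h z * ((t : ℝ≥0∞) * f₀ z) ∂μ := by
              rw [← lintegral_const_mul _ (f := fun z => h z * f₀ z) (hh.mul hf₀)]
              congr 1; funext z; ring
          _ ≤ ∫⁻ z in Sᶜ, h z * f₁ z ∂μ := by
              refine setLIntegral_mono (hh.mul hf₁) fun z hz => ?_
              exact mul_le_mul_right (honSc z hz) _
    _ = ∫⁻ z, h z * f₁ z ∂μ := lintegral_add_compl (fun z => h z * f₁ z) hS
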